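/- arXiv:1901.07011 — 3 statements merged into one kernel-verified Lean document; each statement's English description precedes it below -/
import Mathlib

section
/- For x > 0 and c > 1/2, the inverse Mellin transform along the vertical line Re t = c satisfies (1/(2πi)) ∫_{c-i∞}^{c+i∞} x^{-t} Γ(t) ζ(2t) dt = ∑_{n=1}^∞ e^{-n² x}. -/
open Complex MeasureTheory
open Real Set Filter Asymptotics

noncomputable def expKernel (t : ℝ) : ℂ := ∑' n : ℕ+, (Real.exp (-(n : ℝ) ^ 2 * t) : ℂ)

lemma norm_Gamma_le {s : ℂ} (hs : 0 < s.re) : ‖Complex.Gamma s‖ ≤ Real.Gamma s.re := by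
  rw [Complex.Gamma_eq_integral hs, Real.Gamma_eq_integral hs, Complex.GammaIntegral]
  refine (norm_integral_le_integral_norm _).trans (le_of_eq ?_)
  refine setIntegral_congr_fun measurableSet_Ioi fun t ht => ?_
  rw [norm_mul, Complex.norm_real, Real.norm_eq_abs, _root_.abs_of_nonneg (Real.exp_pos _).le,
    norm_cpow_eq_rpow_re_of_pos ht, Complex.sub_re, Complex.one_re]

lemma norm_Gamma_vert (c : ℝ) (hc : 0 < c) (y : ℝ) :
    ‖Complex.Gamma (c + y * I)‖ ≤ Real.Gamma (c + 2) / (c ^ 2 + y ^ 2) := by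
  set s : ℂ := c + y * I with hs
  have hre : s.re = c := by simp [hs]
  have hns : s ≠ 0 := fun h => by simp [h] at hre; linarith
  have hns1 : s + 1 ≠ 0 := fun h => by
    have : (s + 1).re = 0 := by rw [h]; simp
    simp [Complex.add_re, hre] at this; linarith
  have hG : Complex.Gamma (s + 2) = (s + 1) * (s * Complex.Gamma s) := by
    have h1 : s + 2 = (s + 1) + 1 := by ring
    rw [h1, Complex.Gamma_add_one _ hns1, Complex.Gamma_add_one _ hns]
  have hnorm : ‖Complex.Gamma (s + 2)‖ = ‖s + 1‖ * ‖s‖ * ‖Complex.Gamma s‖ := by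
    rw [hG, norm_mul, norm_mul, mul_assoc]
  have hsq : ‖s‖ ^ 2 = c ^ 2 + y ^ 2 := by
    rw [Complex.sq_norm, hs, Complex.normSq_add_mul_I]
  have h1 : ‖s‖ ≤ ‖s + 1‖ := by
    have : ‖s + 1‖ ^ 2 = (c + 1) ^ 2 + y ^ 2 := by
      have : s + 1 = (↑(c + 1) : ℂ) + y * I := by push_cast [hs]; ring
      rw [this, Complex.sq_norm, Complex.normSq_add_mul_I]
    nlinarith [norm_nonneg s, norm_nonneg (s + 1), hsq]
  have hb : ‖Complex.Gamma (s + 2)‖ ≤ Real.Gamma (c + 2) := by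
    have : (s + 2).re = c + 2 := by simp [hs]
    have := norm_Gamma_le (s := s + 2) (by rw [this]; linarith)
    rwa [‹(s + 2).re = c + 2›] at this
  have hprod : c ^ 2 + y ^ 2 ≤ ‖s + 1‖ * ‖s‖ := by nlinarith [norm_nonneg s, norm_nonneg (s + 1)]
  have hpos : 0 < c ^ 2 + y ^ 2 := by positivity
  rw [le_div_iff₀ hpos]
  calc ‖Complex.Gamma s‖ * (c ^ 2 + y ^ 2) ≤ ‖Complex.Gamma s‖ * (‖s + 1‖ * ‖s‖) := by
        exact mul_le_mul_of_nonneg_left hprod (norm_nonneg _)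
    _ = ‖Complex.Gamma (s + 2)‖ := by rw [hnorm]; ring
    _ ≤ Real.Gamma (c + 2) := hb

lemma summable_geom_pnat {r : ℝ} (h0 : 0 ≤ r) (h1 : r < 1) :
    Summable (fun n : ℕ+ => r ^ (n : ℕ)) :=
  (summable_geometric_of_lt_one h0 h1).comp_injective PNat.coe_injective

lemma tsum_geom_pnat {r : ℝ} (h0 : 0 ≤ r) (h1 : r < 1) :
    ∑' n : ℕ+, r ^ (n : ℕ) = r / (1 - r) := by
  rw [← Equiv.pnatEquivNat.symm.tsum_eq (fun n : ℕ+ => r ^ (n : ℕ))]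
  simp only [Equiv.pnatEquivNat_symm_apply]
  have : ∀ n : ℕ, r ^ ((n.succPNat : ℕ+) : ℕ) = r * r ^ n := by
    intro n
    rw [Nat.succPNat_coe, pow_succ, mul_comm]
  rw [tsum_congr this, tsum_mul_left, tsum_geometric_of_lt_one h0 h1]
  rw [div_eq_mul_inv]

lemma exp_term_le {t : ℝ} (ht : 0 < t) (n : ℕ+) :
    rexp (-(n : ℝ) ^ 2 * t) ≤ rexp (-t) ^ (n : ℕ) := by
  rw [← Real.exp_nat_mul]
  apply Real.exp_le_exp.mpr
  have h1 : (1 : ℝ) ≤ (n : ℝ) := by exact_mod_cast n.one_le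
  nlinarith [mul_nonneg (mul_nonneg (by linarith : (0:ℝ) ≤ (n:ℝ)) (by linarith : (0:ℝ) ≤ (n:ℝ) - 1)) ht.le]

lemma summable_expKernel {t : ℝ} (ht : 0 < t) :
    Summable (fun n : ℕ+ => rexp (-(n : ℝ) ^ 2 * t)) := by
  refine Summable.of_nonneg_of_le (fun n => (Real.exp_pos _).le) (exp_term_le ht)
    (summable_geom_pnat (Real.exp_pos _).le ?_)
  exact Real.exp_lt_one_iff.mpr (by linarith)

lemma hasSum_expKernel {t : ℝ} (ht : 0 < t) :
    HasSum (fun n : ℕ+ => ((rexp (-(n : ℝ) ^ 2 * t)) : ℂ)) (expKernel t) := by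
  exact ((summable_expKernel ht).map Complex.ofRealHom.toAddMonoidHom
    Complex.continuous_ofReal).hasSum

lemma norm_ofReal_exp (a : ℝ) : ‖((rexp a : ℝ) : ℂ)‖ = rexp a := by
  rw [Complex.norm_real, Real.norm_eq_abs, _root_.abs_of_nonneg (Real.exp_pos _).le]

lemma norm_expKernel_le {t : ℝ} (ht : 0 < t) {K r : ℝ} (hK : 0 ≤ K) (h0 : 0 ≤ r) (h1 : r < 1)
    (hb : ∀ n : ℕ+, rexp (-(n : ℝ) ^ 2 * t) ≤ K * r ^ (n : ℕ)) :
    ‖expKernel t‖ ≤ K * (r / (1 - r)) := by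
  have hsum := summable_expKernel ht
  have hsum' : Summable (fun n : ℕ+ => ‖((rexp (-(n : ℝ) ^ 2 * t)) : ℂ)‖) := by
    simpa only [norm_ofReal_exp] using hsum
  calc ‖expKernel t‖ ≤ ∑' n : ℕ+, ‖((rexp (-(n : ℝ) ^ 2 * t)) : ℂ)‖ :=
        norm_tsum_le_tsum_norm hsum'
    _ = ∑' n : ℕ+, rexp (-(n : ℝ) ^ 2 * t) := by
        exact tsum_congr fun n => norm_ofReal_exp _
    _ ≤ ∑' n : ℕ+, K * r ^ (n : ℕ) := by
        refine Summable.tsum_le_tsum hb hsum ?_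
        exact (summable_geom_pnat h0 h1).mul_left K
    _ = K * (r / (1 - r)) := by rw [tsum_mul_left, tsum_geom_pnat h0 h1]

lemma expKernel_bound_zero {t : ℝ} (ht : 0 < t) :
    ‖expKernel t‖ ≤ (rexp 1 / 2) * t ^ (-(1/2 : ℝ)) := by
  set u : ℝ := Real.sqrt t with hu
  have hu0 : 0 < u := Real.sqrt_pos.mpr ht
  have hr1 : rexp (-(2 * u)) < 1 := Real.exp_lt_one_iff.mpr (by linarith)
  have hb : ∀ n : ℕ+, rexp (-(n : ℝ) ^ 2 * t) ≤ rexp 1 * rexp (-(2 * u)) ^ (n : ℕ) := by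
    intro n
    rw [← Real.exp_nat_mul, ← Real.exp_add]
    apply Real.exp_le_exp.mpr
    have hsq : ((n : ℝ) * u - 1) ^ 2 ≥ 0 := sq_nonneg _
    have hut : u ^ 2 = t := Real.sq_sqrt ht.le
    nlinarith
  have := norm_expKernel_le ht (Real.exp_pos 1).le (Real.exp_pos _).le hr1 hb
  refine this.trans ?_
  have key : rexp (-(2 * u)) / (1 - rexp (-(2 * u))) ≤ 1 / (2 * u) := by
    rw [div_le_div_iff₀ (by linarith [Real.exp_pos (-(2*u))]) (by linarith)]
    have h2 : 2 * u + 1 ≤ rexp (2 * u) := by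
      have := Real.add_one_le_exp (2 * u); linarith
    have h3 : rexp (-(2 * u)) * (2 * u + 1) ≤ 1 := by
      rw [Real.exp_neg]
      rw [inv_mul_le_iff₀ (Real.exp_pos _)]
      linarith
    nlinarith [Real.exp_pos (-(2 * u))]
  calc rexp 1 * (rexp (-(2 * u)) / (1 - rexp (-(2 * u)))) ≤ rexp 1 * (1 / (2 * u)) := by
        exact mul_le_mul_of_nonneg_left key (Real.exp_pos 1).le
    _ = (rexp 1 / 2) * t ^ (-(1/2 : ℝ)) := by
        have h6 : t ^ ((1:ℝ)/2) = u := (Real.sqrt_eq_rpow t).symm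
        rw [Real.rpow_neg ht.le, h6]
        field_simp

lemma expKernel_isBigO_zero :
    expKernel =O[nhdsWithin 0 (Ioi 0)] (fun t : ℝ => t ^ (-(1/2 : ℝ))) := by
  refine IsBigO.of_bound (rexp 1 / 2) ?_
  filter_upwards [self_mem_nhdsWithin] with t ht
  rw [Real.norm_rpow_of_nonneg (le_of_lt ht)]
  rw [Real.norm_eq_abs, _root_.abs_of_nonneg (le_of_lt ht)]
  exact expKernel_bound_zero ht

lemma expKernel_isBigO_atTop :
    expKernel =O[atTop] (fun t : ℝ => rexp (-1 * t)) := by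
  refine IsBigO.of_bound (1 / (1 - rexp (-1))) ?_
  filter_upwards [eventually_ge_atTop 1] with t ht
  have ht0 : (0:ℝ) < t := by linarith
  have hr1 : rexp (-t) < 1 := Real.exp_lt_one_iff.mpr (by linarith)
  have hb : ∀ n : ℕ+, rexp (-(n : ℝ) ^ 2 * t) ≤ 1 * rexp (-t) ^ (n : ℕ) := by
    intro n
    rw [one_mul, ← Real.exp_nat_mul]
    apply Real.exp_le_exp.mpr
    have h1 : (1 : ℝ) ≤ (n : ℝ) := by exact_mod_cast n.one_le
    nlinarith [mul_nonneg (mul_nonneg (by linarith : (0:ℝ) ≤ (n:ℝ)) (by linarith : (0:ℝ) ≤ (n:ℝ) - 1)) ht0.le]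
  have := norm_expKernel_le ht0 zero_le_one (Real.exp_pos _).le hr1 hb
  rw [one_mul] at this
  refine this.trans ?_
  rw [Real.norm_eq_abs, _root_.abs_of_nonneg (Real.exp_pos _).le, neg_one_mul]
  have h4 : rexp (-t) ≤ rexp (-1) := Real.exp_le_exp.mpr (by linarith)
  have he1 : rexp (-1) < 1 := Real.exp_lt_one_iff.mpr (by norm_num)
  have hmono : (1 - rexp (-t))⁻¹ ≤ (1 - rexp (-1))⁻¹ := by
    apply inv_anti₀ (by linarith) (by linarith)
  calc rexp (-t) / (1 - rexp (-t)) = rexp (-t) * (1 - rexp (-t))⁻¹ := div_eq_mul_inv _ _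
    _ ≤ rexp (-t) * (1 - rexp (-1))⁻¹ :=
        mul_le_mul_of_nonneg_left hmono (Real.exp_pos _).le
    _ = 1 / (1 - rexp (-1)) * rexp (-t) := by rw [one_div]; ring

lemma continuousAt_expKernel {x : ℝ} (hx : 0 < x) : ContinuousAt expKernel x := by
  have hco : ContinuousOn expKernel (Ioi (x / 2)) := by
    refine continuousOn_tsum (u := fun n : ℕ+ => rexp (-(n : ℝ) ^ 2 * (x / 2)))
      (fun n => ?_) (summable_expKernel (by linarith)) (fun n t ht => ?_)
    · exact (Continuous.comp Complex.continuous_ofReal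
        (Real.continuous_exp.comp (by continuity))).continuousOn
    · rw [norm_ofReal_exp]
      apply Real.exp_le_exp.mpr
      have h1 : (0:ℝ) < (n : ℝ) ^ 2 := by positivity
      have : x / 2 ≤ t := le_of_lt ht
      nlinarith
  exact hco.continuousAt (Ioi_mem_nhds (by linarith))

lemma summable_rpow_pnat {p : ℝ} (hp : 1 < p) :
    Summable (fun n : ℕ+ => 1 / ((n : ℕ) : ℝ) ^ p) :=
  (Real.summable_one_div_nat_rpow.mpr hp).comp_injective PNat.coe_injective

lemma mellin_expKernel_eq {s : ℂ} (hs : 1 / 2 < s.re) :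
    mellin expKernel s = Complex.Gamma s * riemannZeta (2 * s) := by
  have hs0 : 0 < s.re := by linarith
  have hp : ∀ n : ℕ+, (1 : ℂ) = 0 ∨ 0 < ((n : ℝ) ^ 2 : ℝ) := fun n =>
    Or.inr (by positivity)
  have hF : ∀ t ∈ Ioi (0:ℝ), HasSum (fun n : ℕ+ => (1:ℂ) * rexp (-((n:ℝ)^2) * t))
      (expKernel t) := by
    intro t ht
    simpa using hasSum_expKernel (ht : (0:ℝ) < t)
  have h_sum : Summable (fun n : ℕ+ => ‖(1:ℂ)‖ / ((n : ℝ) ^ 2) ^ s.re) := by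
    have := summable_rpow_pnat (p := 2 * s.re) (by linarith)
    refine this.congr fun n => ?_
    rw [norm_one]
    congr 1
    rw [← Real.rpow_natCast ((n:ℕ):ℝ) 2, ← Real.rpow_mul (Nat.cast_nonneg _)]
    norm_num [mul_comm]
  have key := hasSum_mellin hp hs0 hF h_sum
  rw [← key.tsum_eq]
  have h2s : 1 < (2 * s).re := by
    rw [Complex.mul_re]
    norm_num; linarith
  have harg : ∀ m : ℕ, ((m : ℂ)) ^ (2 * s) = ((m : ℂ) ^ (2:ℕ)) ^ s := by
    intro m
    refine Complex.cpow_nat_mul' ?_ ?_ s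
    · rw [Complex.natCast_arg]; simpa using Real.pi_pos
    · rw [Complex.natCast_arg]; simp [Real.pi_nonneg]
  calc ∑' b : ℕ+, Complex.Gamma s * 1 / ((((b:ℕ):ℝ)^2 : ℝ) : ℂ) ^ s
      = ∑' b : ℕ+, Complex.Gamma s * (1 / (((b:ℕ):ℂ)) ^ (2 * s)) := by
        refine tsum_congr fun b => ?_
        have hcast : ((((b:ℕ):ℝ)^2 : ℝ) : ℂ) = ((b:ℕ):ℂ) ^ (2:ℕ) := by push_cast; ring
        rw [hcast, ← harg (b:ℕ), mul_one, mul_one_div]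
    _ = ∑' n : ℕ, Complex.Gamma s * (1 / (((n + 1 : ℕ) : ℂ)) ^ (2 * s)) := by
        rw [← Equiv.pnatEquivNat.symm.tsum_eq
          (fun b : ℕ+ => Complex.Gamma s * (1 / (((b:ℕ):ℂ)) ^ (2 * s)))]
        refine tsum_congr fun n => ?_
        simp only [Equiv.pnatEquivNat_symm_apply, Nat.succPNat_coe]
    _ = Complex.Gamma s * riemannZeta (2 * s) := by
        rw [zeta_eq_tsum_one_div_nat_add_one_cpow h2s, ← tsum_mul_left]
        refine tsum_congr fun n => ?_
        push_cast
        ring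

lemma norm_zeta_le {s : ℂ} (hs : 1 < s.re) :
    ‖riemannZeta s‖ ≤ ∑' n : ℕ, 1 / ((n : ℝ) + 1) ^ s.re := by
  rw [zeta_eq_tsum_one_div_nat_add_one_cpow hs]
  have hnorm : ∀ n : ℕ, ‖(1:ℂ) / ((n : ℂ) + 1) ^ s‖ = 1 / ((n : ℝ) + 1) ^ s.re := by
    intro n
    rw [norm_div, norm_one,
      show ((n : ℂ) + 1) = (((n : ℝ) + 1 : ℝ) : ℂ) by push_cast; ring,
      norm_cpow_eq_rpow_re_of_pos (by positivity)]
  have hsummable : Summable (fun n : ℕ => 1 / ((n : ℝ) + 1) ^ s.re) := by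
    have := (Real.summable_one_div_nat_rpow.mpr hs).comp_injective Nat.succ_injective
    refine this.congr fun n => ?_
    push_cast [Function.comp]
    norm_num
  refine (norm_tsum_le_tsum_norm ?_).trans (le_of_eq (tsum_congr hnorm))
  exact hsummable.congr fun n => (hnorm n).symm

lemma integrable_inv_sq_add (c : ℝ) (hc : 0 < c) :
    Integrable (fun y : ℝ => (c ^ 2 + y ^ 2)⁻¹) := by
  have h1 : Integrable (fun y : ℝ => (1 + (y / c) ^ 2)⁻¹) := by
    have := integrable_inv_one_add_sq.comp_div (R := c) hc.ne'
    simpa using this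
  have h2 := h1.const_mul (c ^ 2)⁻¹
  refine h2.congr ?_
  filter_upwards with y
  rw [← mul_inv]
  congr 1
  field_simp

lemma re_aux (c y : ℝ) : ((c : ℂ) + y * I).re = c := by simp

lemma continuous_GZ (c : ℝ) (hc : 1 / 2 < c) :
    Continuous (fun y : ℝ => Complex.Gamma (c + y * I) * riemannZeta (2 * ((c : ℂ) + y * I))) := by
  rw [continuous_iff_continuousAt]
  intro y
  have hline : Continuous (fun y : ℝ => (c : ℂ) + y * I) := by continuity
  have h1 : ContinuousAt Complex.Gamma ((c : ℂ) + y * I) := by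
    refine (Complex.differentiableAt_Gamma _ fun m => ?_).continuousAt
    intro h
    have := congrArg Complex.re h
    rw [re_aux] at this
    simp at this
    linarith [this, Nat.cast_nonneg (α := ℝ) m]
  have h2 : ContinuousAt riemannZeta (2 * ((c : ℂ) + y * I)) := by
    refine (differentiableAt_riemannZeta ?_).continuousAt
    intro h
    have := congrArg Complex.re h
    rw [Complex.mul_re] at this
    simp [re_aux] at this
    norm_num at this
    linarith
  have hA : ContinuousAt (fun y : ℝ => Complex.Gamma ((c:ℂ) + y * I)) y := by
    simpa [Function.comp_def] using
      ContinuousAt.comp (x := y) (f := fun y : ℝ => (c:ℂ) + y * I) h1 hline.continuousAt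
  have hB : ContinuousAt (fun y : ℝ => riemannZeta (2 * ((c:ℂ) + y * I))) y := by
    simpa [Function.comp_def] using
      ContinuousAt.comp (x := y) (f := fun y : ℝ => 2 * ((c:ℂ) + y * I)) h2 ((continuous_const.mul hline).continuousAt)
  exact hA.mul hB

lemma vertical_integrable (c : ℝ) (hc : 1 / 2 < c) :
    Complex.VerticalIntegrable (mellin expKernel) c := by
  have hc0 : 0 < c := by linarith
  have heq : ∀ y : ℝ, mellin expKernel ((c : ℂ) + y * I) =
      Complex.Gamma (c + y * I) * riemannZeta (2 * ((c : ℂ) + y * I)) := fun y =>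
    mellin_expKernel_eq (by rw [re_aux]; exact hc)
  rw [Complex.VerticalIntegrable]
  refine Integrable.congr ?_ (ae_of_all _ fun y => (heq y).symm)
  set Z : ℝ := ∑' n : ℕ, 1 / ((n : ℝ) + 1) ^ (2 * c) with hZ
  have hZ0 : 0 ≤ Z := tsum_nonneg fun n => by positivity
  refine Integrable.mono' (((integrable_inv_sq_add c hc0).const_mul
    (Real.Gamma (c + 2) * Z))) ((continuous_GZ c hc).aestronglyMeasurable) ?_
  filter_upwards with y
  rw [norm_mul]
  have hzb : ‖riemannZeta (2 * ((c : ℂ) + y * I))‖ ≤ Z := by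
    have hre : (2 * ((c : ℂ) + y * I)).re = 2 * c := by
      rw [Complex.mul_re]; simp
    have := norm_zeta_le (s := 2 * ((c : ℂ) + y * I)) (by rw [hre]; linarith)
    rwa [hre] at this
  have hgb := norm_Gamma_vert c hc0 y
  have hG0 : 0 ≤ Real.Gamma (c + 2) := Real.Gamma_nonneg_of_nonneg (by linarith)
  calc ‖Complex.Gamma (c + y * I)‖ * ‖riemannZeta (2 * ((c : ℂ) + y * I))‖
      ≤ (Real.Gamma (c + 2) / (c ^ 2 + y ^ 2)) * Z := by
        refine mul_le_mul hgb hzb (norm_nonneg _) (by positivity)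
    _ = Real.Gamma (c + 2) * Z * (c ^ 2 + y ^ 2)⁻¹ := by ring

lemma mellinConvergent_expKernel (c : ℝ) (hc : 1 / 2 < c) :
    MellinConvergent expKernel (c : ℂ) := by
  have hloc : LocallyIntegrableOn expKernel (Ioi 0) := by
    refine ContinuousOn.locallyIntegrableOn ?_ measurableSet_Ioi
    exact fun t ht => (continuousAt_expKernel ht).continuousWithinAt
  refine mellinConvergent_of_isBigO_rpow_exp one_pos hloc expKernel_isBigO_atTop
    expKernel_isBigO_zero ?_
  rw [Complex.ofReal_re]; linarith

theorem inverse_mellin_gamma_zeta (x c : ℝ) (hx : 0 < x) (hc : 1 / 2 < c) :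
    (1 / (2 * Real.pi) : ℂ) *
        ∫ y : ℝ, (x : ℂ) ^ (-(c + y * I)) * Complex.Gamma (c + y * I) *
          riemannZeta (2 * (c + y * I)) =
      ∑' n : ℕ+, (Real.exp (-(n : ℝ) ^ 2 * x) : ℂ) := by
  have key := mellinInv_mellin_eq c expKernel hx (mellinConvergent_expKernel c hc)
    (vertical_integrable c hc) (continuousAt_expKernel hx)
  have hker : expKernel x = ∑' n : ℕ+, (Real.exp (-(n : ℝ) ^ 2 * x) : ℂ) := rfl
  rw [← hker, ← key, mellinInv]
  rw [Complex.real_smul]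
  push_cast
  congr 1
  refine integral_congr_ae (ae_of_all _ fun y => ?_)
  simp only [smul_eq_mul, mellin_expKernel_eq (show 1/2 < ((c:ℂ) + y * I).re by rw [re_aux]; exact hc)]
  ring
end

section
/- For all real τ, Ξ(τ) = 1/2 − (τ² + 1/4) ∫_1^∞ t^{-3/4} cos((τ/2) log t) ψ(t) dt, where ψ(t) = ∑_{n=1}^∞ e^{-π n² t} and Ξ(τ) = ξ(1/2 + iτ). -/
open Complex MeasureTheory Set

noncomputable def xi (s : ℂ) : ℂ :=
  (s - 1) * (Real.pi : ℂ) ^ (-s / 2) * Complex.Gamma (1 + s / 2) * riemannZeta s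

noncomputable def psi (t : ℝ) : ℝ := ∑' n : ℕ+, Real.exp (-Real.pi * n ^ 2 * t)



section XiAux
open HurwitzZeta Real Asymptotics

lemma theta_eq {t : ℝ} (ht : 0 < t) : evenKernel 0 t = 1 + 2 * psi t := by
  have h := hasSum_nat_cosKernel₀ 0 ht
  simp only [mul_zero, zero_mul, Real.cos_zero, mul_one] at h
  have h2 : HasSum (fun n : ℕ => Real.exp (-Real.pi * (n+1 : ℕ) ^ 2 * t)) ((cosKernel 0 t - 1)/2) := by
    refine (h.div_const 2).congr_fun fun n => by push_cast; ring
  have h3 : HasSum (fun n : ℕ+ => Real.exp (-Real.pi * (n:ℕ) ^ 2 * t)) ((cosKernel 0 t - 1)/2) :=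
    (Equiv.pnatEquivNat.symm.hasSum_iff).mp (h2.congr_fun fun n => rfl)
  have h4 := h3.tsum_eq
  rw [psi]
  push_cast
  rw [show (fun n : ℕ+ => Real.exp (-Real.pi * (n:ℝ) ^ 2 * t)) = fun n : ℕ+ => Real.exp (-Real.pi * ((n:ℕ):ℝ) ^ 2 * t) from rfl, h4]
  rw [show evenKernel (0 : UnitAddCircle) = cosKernel 0 from ?_]
  · ring
  · exact evenKernel_eq_cosKernel_of_zero

noncomputable def N (t : ℝ) : ℂ := ((evenKernel 0 t : ℝ) : ℂ) - 1

lemma int1 {w : ℂ} (hw : w.re ≤ 0) :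
    IntegrableOn (fun t : ℝ => (t:ℂ)^w * N t) (Ioi 1) := by
  obtain ⟨p, hp, hO⟩ := isBigO_atTop_evenKernel_sub 0
  rw [if_pos rfl] at hO
  have hcont : ContinuousOn (fun t : ℝ => evenKernel 0 t - 1) (Ici 1) :=
    ((continuousOn_evenKernel 0).mono (fun x hx => mem_Ioi.mpr (lt_of_lt_of_le one_pos hx))).sub
      continuousOn_const
  have hg : IntegrableOn (fun t => ‖evenKernel 0 t - 1‖) (Ioi 1) :=
    integrable_of_isBigO_exp_neg hp hcont.norm hO.norm_left
  refine hg.mono' ?_ ?_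
  · refine ContinuousOn.aestronglyMeasurable ?_ measurableSet_Ioi
    refine ContinuousOn.mul ?_ ?_
    · intro t ht
      exact ((continuousAt_cpow_const
        (Complex.ofReal_mem_slitPlane.mpr (lt_trans one_pos ht))).comp
        Complex.continuous_ofReal.continuousAt).continuousWithinAt
    · exact (Complex.continuous_ofReal.comp_continuousOn
        ((continuousOn_evenKernel 0).mono (fun x hx => mem_Ioi.mpr (lt_trans one_pos hx)))).sub
        continuousOn_const
  · rw [ae_restrict_iff' measurableSet_Ioi]
    filter_upwards with t ht
    have ht1 : (1:ℝ) < t := ht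
    have ht0 : (0:ℝ) < t := lt_trans one_pos ht1
    rw [norm_mul]
    have h1 : ‖(t:ℂ)^w‖ = t ^ w.re := by
      rw [Complex.norm_cpow_eq_rpow_re_of_pos ht0]
    have h2 : ‖N t‖ = ‖evenKernel 0 t - 1‖ := by
      rw [N, show ((evenKernel 0 t : ℝ) : ℂ) - 1 = ((evenKernel 0 t - 1 : ℝ) : ℂ) by push_cast; ring,
        Complex.norm_real]
    rw [h1, h2]
    exact mul_le_of_le_one_left (norm_nonneg _)
      (Real.rpow_le_one_of_one_le_of_nonpos ht1.le hw)

noncomputable def u : ℝ → ℂ := (Ioi 1).indicator N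

lemma P_f₀ : (hurwitzEvenFEPair 0).f₀ = 1 := by simp [hurwitzEvenFEPair]
lemma P_g₀ : (hurwitzEvenFEPair 0).g₀ = 1 := rfl
lemma P_ε : (hurwitzEvenFEPair 0).ε = 1 := rfl
lemma P_k : (hurwitzEvenFEPair 0).k = 1/2 := rfl
lemma P_f (t : ℝ) : (hurwitzEvenFEPair 0).f t = ((evenKernel 0 t : ℝ) : ℂ) := rfl

example (t : ℝ) : (hurwitzEvenFEPair 0).f_modif t =
    (Ioi 1).indicator N t + (Ioo 0 1).indicator
      (fun x => ((evenKernel 0 x : ℝ) : ℂ) - ((x ^ (-(1/2):ℝ) : ℝ) : ℂ)) t := by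
  rw [WeakFEPair.f_modif]
  simp only [Pi.add_apply, P_f₀, P_g₀, P_ε, P_k, P_f, one_mul, smul_eq_mul, mul_one, N]
  rfl

lemma f_modif_eq (t : ℝ) : (hurwitzEvenFEPair 0).f_modif t =
    (Ioi 1).indicator N t + (Ioo 0 1).indicator
      (fun x => ((evenKernel 0 x : ℝ) : ℂ) - ((x ^ (-(1/2):ℝ) : ℝ) : ℂ)) t := by
  rw [WeakFEPair.f_modif]
  simp only [Pi.add_apply, P_f₀, P_g₀, P_ε, P_k, P_f, one_mul, smul_eq_mul, mul_one, N]
  rfl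

-- v equals w₂ ∘ (· ^ (-1 : ℝ)) on Ioi 0
lemma v_eq {t : ℝ} (ht : 0 < t) :
    (hurwitzEvenFEPair 0).f_modif t - u t
      = ((((t ^ (-1:ℝ) : ℝ)) : ℂ)) ^ ((1:ℂ)/2) • u (t ^ (-1:ℝ)) := by
  rw [f_modif_eq, u, Real.rpow_neg_one]
  have hofr : ∀ {x : ℝ}, 0 ≤ x → ((x : ℂ)) ^ ((1:ℂ)/2) = ((x ^ ((1:ℝ)/2) : ℝ) : ℂ) := by
    intro x hx
    rw [show ((1:ℂ)/2) = (((1:ℝ)/2 : ℝ) : ℂ) by norm_num, ofReal_cpow hx]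
  rcases lt_trichotomy t 1 with h1 | h1 | h1
  · have hti : 1 < t⁻¹ := (one_lt_inv₀ ht).mpr h1
    rw [indicator_of_notMem (notMem_Ioi.mpr h1.le), indicator_of_mem (mem_Ioo.mpr ⟨ht, h1⟩),
      indicator_of_mem (mem_Ioi.mpr hti), zero_add]
    have hFE : evenKernel (0 : UnitAddCircle) t⁻¹ = t ^ ((1:ℝ)/2) * evenKernel 0 t := by
      have h := evenKernel_functional_equation (0 : UnitAddCircle) t⁻¹
      simp only [one_div, inv_inv, Real.inv_rpow ht.le,
        ← evenKernel_eq_cosKernel_of_zero] at h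
      rw [show ((1:ℝ)/2) = 2⁻¹ by norm_num]
      exact h
    rw [hofr (inv_nonneg.mpr ht.le), N, hFE]
    rw [Real.inv_rpow ht.le, ← Real.rpow_neg ht.le]
    have h2 : (t:ℝ) ^ (-((1:ℝ)/2)) * (t ^ ((1:ℝ)/2)) = 1 := by
      rw [← Real.rpow_add ht]; norm_num
    have h3 := congrArg (Complex.ofReal) h2
    push_cast at h3 ⊢
    rw [smul_eq_mul]
    linear_combination (-((evenKernel 0 t : ℝ) : ℂ)) * h3

  · subst h1
    simp [u, N]
  · have hti : t⁻¹ < 1 := inv_lt_one_of_one_lt₀ h1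
    rw [indicator_of_mem (mem_Ioi.mpr h1), indicator_of_notMem (notMem_Ioo_of_ge h1.le),
      indicator_of_notMem (notMem_Ioi.mpr hti.le), add_zero, sub_self, smul_zero]

lemma indicator_eq (w : ℂ) : (fun t : ℝ => (t:ℂ)^(w-1) • u t)
    = (Ioi 1).indicator (fun t : ℝ => (t:ℂ)^(w-1) * N t) := by
  funext t
  rw [u, indicator_apply, indicator_apply]
  split_ifs
  · rw [smul_eq_mul]
  · rw [smul_zero]

lemma mellin_conv_u {w : ℂ} (hw : w.re ≤ 1) :
    MellinConvergent u w := by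
  rw [MellinConvergent, IntegrableOn, indicator_eq,
    integrable_indicator_iff measurableSet_Ioi, IntegrableOn,
    Measure.restrict_restrict measurableSet_Ioi,
    show Ioi (1:ℝ) ∩ Ioi 0 = Ioi 1 by rw [Ioi_inter_Ioi]; norm_num]
  exact int1 (by rw [Complex.sub_re, Complex.one_re]; linarith)

lemma mellin_u_eq (w : ℂ) : mellin u w = ∫ t in Ioi (1:ℝ), (t:ℂ)^(w-1) * N t := by
  rw [mellin, indicator_eq, setIntegral_indicator measurableSet_Ioi,
    show Ioi (0:ℝ) ∩ Ioi 1 = Ioi 1 by rw [Ioi_inter_Ioi]; norm_num]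

lemma key {z : ℂ} (h1 : z.re ≤ 1) (h2 : z.re ≥ -(1:ℝ)/2) :
    (hurwitzEvenFEPair 0).Λ₀ z = mellin u z + mellin u (1/2 - z) := by
  have hu1 : Integrable (fun t : ℝ => (t:ℂ)^(z-1) • u t) (volume.restrict (Ioi 0)) :=
    mellin_conv_u h1
  have hFM : Integrable (fun t : ℝ => (t:ℂ)^(z-1) • (hurwitzEvenFEPair 0).f_modif t)
      (volume.restrict (Ioi 0)) := ((hurwitzEvenFEPair 0).isStrongFEPair_toStrongFEPair.hasMellin z).1
  have hv1 : Integrable (fun t : ℝ => (t:ℂ)^(z-1) • ((hurwitzEvenFEPair 0).f_modif t - u t))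
      (volume.restrict (Ioi 0)) := by
    have := hFM.sub hu1
    refine this.congr (Filter.Eventually.of_forall fun t => ?_)
    simp only [Pi.sub_apply, smul_sub]
  have step1 : (hurwitzEvenFEPair 0).Λ₀ z
      = mellin u z + mellin (fun t => (hurwitzEvenFEPair 0).f_modif t - u t) z := by
    rw [WeakFEPair.Λ₀, mellin, mellin, mellin, ← integral_add hu1 hv1]
    refine setIntegral_congr_fun measurableSet_Ioi fun t _ => ?_
    rw [← smul_add, add_sub_cancel]
  have step2 : mellin (fun t => (hurwitzEvenFEPair 0).f_modif t - u t) z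
      = mellin (fun x : ℝ => ((x:ℝ):ℂ)^((1:ℂ)/2) • u x) (-z) := by
    have e1 : mellin (fun t => (hurwitzEvenFEPair 0).f_modif t - u t) z
        = mellin (fun t : ℝ => (fun x : ℝ => ((x:ℝ):ℂ)^((1:ℂ)/2) • u x) (t ^ (-1:ℝ))) z :=
      setIntegral_congr_fun measurableSet_Ioi fun t ht => by
        show (t:ℂ) ^ (z-1) • ((hurwitzEvenFEPair 0).f_modif t - u t) = _
        rw [v_eq ht]
    rw [e1, mellin_comp_rpow (fun x : ℝ => ((x:ℝ):ℂ)^((1:ℂ)/2) • u x) z (-1:ℝ)]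
    rw [show z / ((-1:ℝ):ℂ) = -z by push_cast; ring]
    norm_num
  have step3 : mellin (fun x : ℝ => ((x:ℝ):ℂ)^((1:ℂ)/2) • u x) (-z) = mellin u (1/2 - z) := by
    rw [mellin_cpow_smul, neg_add_eq_sub]
  rw [step1, step2, step3]

lemma alg {s J : ℂ} (hs0 : s ≠ 0) (hs1 : 1 - s ≠ 0) :
    (s - 1) * (s/2) * (2*J - 1/s - 1/(1-s)) = 1/2 - (s*(1-s))*J := by
  field_simp
  ring

lemma cpow_eval {t : ℝ} (ht : 0 < t) (a b : ℝ) :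
    (t:ℂ) ^ ((a:ℂ) + (b:ℂ)*I) =
      ((t ^ a : ℝ) : ℂ) * (Real.cos (b * Real.log t) + Real.sin (b * Real.log t) * I) := by
  rw [Complex.cpow_def_of_ne_zero (ofReal_ne_zero.mpr ht.ne'), ← Complex.ofReal_log ht.le,
    show (Real.log t : ℂ) * ((a:ℂ) + (b:ℂ)*I)
      = ((a * Real.log t : ℝ) : ℂ) + ((b * Real.log t : ℝ) : ℂ) * I by push_cast; ring,
    Complex.exp_add, Complex.exp_mul_I, ← Complex.ofReal_exp, ← Complex.ofReal_cos,
    ← Complex.ofReal_sin, Real.rpow_def_of_pos ht, mul_comm a (Real.log t)]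

lemma cpow_sum_eval {t : ℝ} (ht : 0 < t) (a b : ℝ) :
    (t:ℂ) ^ ((a:ℂ) + (b:ℂ)*I) + (t:ℂ) ^ ((a:ℂ) - (b:ℂ)*I) =
      ((2 * t ^ a * Real.cos (b * Real.log t) : ℝ) : ℂ) := by
  have h2 : (t:ℂ) ^ ((a:ℂ) - (b:ℂ)*I) = (t:ℂ) ^ ((a:ℂ) + ((-b : ℝ):ℂ)*I) := by
    push_cast; ring_nf
  rw [h2, cpow_eval ht, cpow_eval ht, neg_mul, Real.cos_neg, Real.sin_neg]
  push_cast
  ring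

theorem Xi_riemann_rep (τ : ℝ) :
    xi (1 / 2 + I * τ) = 1 / 2 - ((τ : ℂ) ^ 2 + 1 / 4) *
      ((∫ t in Ioi (1 : ℝ), t ^ (-(3 : ℝ) / 4) * Real.cos (τ / 2 * Real.log t) * psi t : ℝ) : ℂ) := by
  have hsre : ((1:ℂ)/2 + I*τ).re = 1/2 := by simp
  have hs0 : (1:ℂ)/2 + I*τ ≠ 0 := by
    intro h; rw [h] at hsre; norm_num at hsre
  have hs1 : (1:ℂ) - (1/2 + I*τ) ≠ 0 := by
    intro h
    have h' := congrArg Complex.re h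
    rw [Complex.sub_re, Complex.one_re, hsre, Complex.zero_re] at h'
    norm_num at h' 
  have hzre : (((1:ℂ)/2 + I*τ)/2).re = 1/4 := by
    rw [show ((1:ℂ)/2 + I*τ)/2 = 1/4 + I*(τ/2 : ℝ) by push_cast; ring]
    simp
  -- the real integral
  set R : ℝ := ∫ t in Ioi (1 : ℝ), t ^ (-(3 : ℝ) / 4) * Real.cos (τ / 2 * Real.log t) * psi t
    with hR
  -- evaluation of the two mellin transforms
  have hint1 : IntegrableOn (fun t : ℝ => (t:ℂ)^(((1:ℂ)/2 + I*τ)/2 - 1) * N t) (Ioi 1) := by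
    refine int1 ?_
    rw [Complex.sub_re, Complex.one_re, hzre]; norm_num
  have hint2 : IntegrableOn
      (fun t : ℝ => (t:ℂ)^((1:ℂ)/2 - ((1:ℂ)/2 + I*τ)/2 - 1) * N t) (Ioi 1) := by
    refine int1 ?_
    rw [Complex.sub_re, Complex.sub_re, Complex.one_re, hzre]
    norm_num [Complex.div_re]
  have hmel : mellin u (((1:ℂ)/2 + I*τ)/2) + mellin u (1/2 - ((1:ℂ)/2 + I*τ)/2)
      = ((4 * R : ℝ) : ℂ) := by
    rw [mellin_u_eq, mellin_u_eq, ← integral_add hint1 hint2]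
    have hpt : ∀ t ∈ Ioi (1:ℝ),
        (t:ℂ)^(((1:ℂ)/2 + I*τ)/2 - 1) * N t + (t:ℂ)^((1:ℂ)/2 - ((1:ℂ)/2 + I*τ)/2 - 1) * N t
        = ((4 * (t ^ (-(3:ℝ)/4) * Real.cos (τ/2 * Real.log t) * psi t) : ℝ) : ℂ) := by
      intro t ht
      have ht0 : (0:ℝ) < t := lt_trans one_pos ht
      have hN : N t = ((2 * psi t : ℝ) : ℂ) := by
        rw [N, theta_eq ht0]; push_cast; ring
      rw [hN, ← add_mul,
        show ((1:ℂ)/2 + I*τ)/2 - 1 = ((-(3:ℝ)/4 : ℝ):ℂ) + ((τ/2 : ℝ):ℂ)*I by push_cast; ring,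
        show (1:ℂ)/2 - ((1:ℂ)/2 + I*τ)/2 - 1 = ((-(3:ℝ)/4 : ℝ):ℂ) - ((τ/2 : ℝ):ℂ)*I by
          push_cast; ring,
        cpow_sum_eval ht0]
      push_cast
      ring
    rw [setIntegral_congr_fun measurableSet_Ioi hpt,
      show (∫ t in Ioi (1:ℝ),
          ((4 * (t ^ (-(3:ℝ)/4) * Real.cos (τ/2 * Real.log t) * psi t) : ℝ) : ℂ))
        = ((∫ t in Ioi 1, 4 * (t ^ (-(3:ℝ)/4) * Real.cos (τ/2 * Real.log t) * psi t) : ℝ) : ℂ)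
        from integral_ofReal, integral_const_mul, ← hR]
  -- value of Λ₀
  have hΛ₀ : completedRiemannZeta₀ ((1:ℂ)/2 + I*τ) = 2 * ((R : ℝ) : ℂ) := by
    have hk := key (z := ((1:ℂ)/2 + I*τ)/2) (by rw [hzre]; norm_num)
      (by rw [hzre]; norm_num)
    calc completedRiemannZeta₀ ((1:ℂ)/2 + I*τ)
        = (hurwitzEvenFEPair 0).Λ₀ (((1:ℂ)/2 + I*τ)/2) / 2 := rfl
      _ = ((4 * R : ℝ) : ℂ) / 2 := by rw [hk, hmel]
      _ = 2 * ((R : ℝ) : ℂ) := by push_cast; ring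
  have hΛ : completedRiemannZeta ((1:ℂ)/2 + I*τ)
      = 2 * ((R : ℝ) : ℂ) - 1/((1:ℂ)/2 + I*τ) - 1/(1 - ((1:ℂ)/2 + I*τ)) := by
    rw [completedRiemannZeta_eq, hΛ₀]
  -- nonvanishing facts
  have hπ : ((Real.pi : ℝ):ℂ) ^ (-((1:ℂ)/2 + I*τ)/2) ≠ 0 := by
    simp [Complex.cpow_eq_zero_iff, Real.pi_ne_zero]
  have hΓ : Complex.Gamma (((1:ℂ)/2 + I*τ)/2) ≠ 0 := by
    refine Complex.Gamma_ne_zero fun m => ?_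
    intro h
    have h' := congrArg Complex.re h
    rw [hzre] at h'
    simp only [Complex.neg_re, Complex.natCast_re] at h'
    have : (0:ℝ) ≤ (m:ℝ) := Nat.cast_nonneg m
    linarith
  have hΓadd : Complex.Gamma (1 + ((1:ℂ)/2 + I*τ)/2)
      = (((1:ℂ)/2 + I*τ)/2) * Complex.Gamma (((1:ℂ)/2 + I*τ)/2) := by
    rw [add_comm]
    exact Complex.Gamma_add_one _ (div_ne_zero hs0 two_ne_zero)
  -- final computation
  have hprod : ((1:ℂ)/2 + I*τ) * (1 - ((1:ℂ)/2 + I*τ)) = (τ:ℂ)^2 + 1/4 := by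
    linear_combination (-(τ:ℂ)^2) * Complex.I_sq
  have hD : ((τ:ℂ)^2 + 1/4) ≠ 0 := by
    rw [← hprod]; exact mul_ne_zero hs0 hs1
  rw [xi, riemannZeta_def_of_ne_zero hs0, hΛ, hΓadd, Complex.Gammaℝ_def]
  have hAB : (Real.pi:ℂ)^(-((1:ℂ)/2 + I*τ)/2) * Complex.Gamma (((1:ℂ)/2 + I*τ)/2) ≠ 0 :=
    mul_ne_zero hπ hΓ
  rw [show ∀ X : ℂ, (((1:ℂ)/2 + I*τ) - 1) * (Real.pi:ℂ)^(-((1:ℂ)/2 + I*τ)/2)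
        * ((((1:ℂ)/2 + I*τ)/2) * Complex.Gamma (((1:ℂ)/2 + I*τ)/2))
        * (X / ((Real.pi:ℂ)^(-((1:ℂ)/2 + I*τ)/2) * Complex.Gamma (((1:ℂ)/2 + I*τ)/2)))
      = (((1:ℂ)/2 + I*τ) - 1) * ((((1:ℂ)/2 + I*τ))/2) * X from fun X => by
    rw [show (((1:ℂ)/2 + I*τ) - 1) * (Real.pi:ℂ)^(-((1:ℂ)/2 + I*τ)/2)
        * ((((1:ℂ)/2 + I*τ)/2) * Complex.Gamma (((1:ℂ)/2 + I*τ)/2))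
        * (X / ((Real.pi:ℂ)^(-((1:ℂ)/2 + I*τ)/2) * Complex.Gamma (((1:ℂ)/2 + I*τ)/2)))
      = (((1:ℂ)/2 + I*τ) - 1) * ((((1:ℂ)/2 + I*τ))/2) * X
        * (((Real.pi:ℂ)^(-((1:ℂ)/2 + I*τ)/2) * Complex.Gamma (((1:ℂ)/2 + I*τ)/2))
          / ((Real.pi:ℂ)^(-((1:ℂ)/2 + I*τ)/2) * Complex.Gamma (((1:ℂ)/2 + I*τ)/2))) by ring,
      div_self hAB, mul_one]]
  rw [← hprod]
  exact alg hs0 hs1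

end XiAux
end

section
/- For real τ, Ξ(τ) = 4 ∫_1^∞ t^{1/4} cos((τ/2) log t) [ t ψ''(t) + (3/2) ψ'(t) ] dt, where ψ(t) = ∑_{n=1}^∞ e^{-π n² t} and Ξ(τ) = ξ(1/2+iτ). -/
open Complex MeasureTheory Set

namespace XiRep

open Real Filter Topology Asymptotics

noncomputable def F (k : ℕ) (t : ℝ) : ℝ :=
  ∑' n : ℕ+, (-(Real.pi * (n : ℝ) ^ 2)) ^ k * Real.exp (-Real.pi * (n : ℝ) ^ 2 * t)

lemma F_zero_eq : F 0 = psi := by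
  funext t
  simp [F, psi]

lemma abs_term (k : ℕ) (n : ℕ+) (x : ℝ) :
    |(-(π * (n : ℝ) ^ 2)) ^ k * rexp x| = (π * (n : ℝ) ^ 2) ^ k * rexp x := by
  rw [abs_mul, _root_.abs_pow, abs_neg,
    abs_of_pos (by positivity : (0:ℝ) < π * (n:ℝ)^2), abs_of_pos (exp_pos _)]

lemma one_le_sq (n : ℕ+) : (1 : ℝ) ≤ (n : ℝ) ^ 2 := by
  have : (1 : ℝ) ≤ (n : ℝ) := by exact_mod_cast n.one_le
  nlinarith

lemma summable_nat (k : ℕ) {t : ℝ} (ht : 0 < t) :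
    Summable (fun n : ℕ => (π * (n : ℝ) ^ 2) ^ k * rexp (-π * (n : ℝ) ^ 2 * t)) := by
  have hr : ‖rexp (-π * t)‖ < 1 := by
    rw [Real.norm_eq_abs, abs_of_pos (exp_pos _)]
    exact exp_lt_one_iff.mpr (by nlinarith [pi_pos])
  refine Summable.of_nonneg_of_le (fun n => by positivity) (fun n => ?_)
    ((summable_pow_mul_geometric_of_norm_lt_one (2 * k) hr).mul_left (π ^ k))
  have hn2 : (n : ℝ) ≤ (n : ℝ) ^ 2 := by
    rcases Nat.eq_zero_or_pos n with h | h
    · simp [h]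
    · have h1 : (1 : ℝ) ≤ (n : ℝ) := by exact_mod_cast h
      nlinarith
  calc (π * (n : ℝ) ^ 2) ^ k * rexp (-π * (n : ℝ) ^ 2 * t)
      ≤ (π * (n : ℝ) ^ 2) ^ k * rexp (-π * (n : ℝ) * t) := by
        refine mul_le_mul_of_nonneg_left (exp_le_exp.mpr ?_) (by positivity)
        nlinarith [pi_pos, mul_le_mul_of_nonneg_right hn2 ht.le]
    _ = π ^ k * ((n : ℝ) ^ (2 * k) * rexp (-π * t) ^ n) := by
        rw [mul_pow, pow_mul, ← Real.exp_nat_mul]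
        ring_nf

lemma summable_pnat (k : ℕ) {t : ℝ} (ht : 0 < t) :
    Summable (fun n : ℕ+ => (π * (n : ℝ) ^ 2) ^ k * rexp (-π * (n : ℝ) ^ 2 * t)) :=
  (summable_nat k ht).comp_injective PNat.coe_injective

lemma summable_pnat' (k : ℕ) {t : ℝ} (ht : 0 < t) :
    Summable (fun n : ℕ+ => (-(π * (n : ℝ) ^ 2)) ^ k * rexp (-π * (n : ℝ) ^ 2 * t)) := by
  refine ((summable_pnat k ht).mul_left ((-1) ^ k)).congr (fun n => ?_)
  rw [neg_pow]
  ring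

lemma hasDerivAt_F (k : ℕ) {t : ℝ} (ht : 0 < t) : HasDerivAt (F k) (F (k + 1) t) t := by
  have h2 : (0 : ℝ) < t / 2 := by linarith
  have key : HasDerivAt (fun z : ℝ => ∑' n : ℕ+, (-(π * (n : ℝ) ^ 2)) ^ k *
      rexp (-π * (n : ℝ) ^ 2 * z))
      (∑' n : ℕ+, (-(π * (n : ℝ) ^ 2)) ^ (k + 1) * rexp (-π * (n : ℝ) ^ 2 * t)) t := by
    refine hasDerivAt_tsum_of_isPreconnected (u := fun n : ℕ+ =>
        (π * (n : ℝ) ^ 2) ^ (k + 1) * rexp (-π * (n : ℝ) ^ 2 * (t / 2)))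
      (t := Ioi (t / 2 : ℝ)) (y₀ := t) (y := t)
      (g := fun (n : ℕ+) (z : ℝ) => (-(π * (n : ℝ) ^ 2)) ^ k * rexp (-π * (n : ℝ) ^ 2 * z))
      (g' := fun (n : ℕ+) (z : ℝ) => (-(π * (n : ℝ) ^ 2)) ^ (k + 1) * rexp (-π * (n : ℝ) ^ 2 * z))
      (summable_pnat (k + 1) h2) isOpen_Ioi isPreconnected_Ioi (fun n y _ => ?_)
      (fun n y hy => ?_) (mem_Ioi.mpr (by linarith : t / 2 < t)) (summable_pnat' k ht)
      (mem_Ioi.mpr (by linarith : t / 2 < t))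
    · have h := ((hasDerivAt_id y).const_mul (-π * (n : ℝ) ^ 2)).exp
      have h' := h.const_mul ((-(π * (n : ℝ) ^ 2)) ^ k)
      simp only [id_eq] at h'
      refine h'.congr_deriv ?_
      rw [pow_succ]
      ring
    · rw [Real.norm_eq_abs, abs_term]
      refine mul_le_mul_of_nonneg_left (exp_le_exp.mpr ?_) (by positivity)
      have hy2 : t / 2 ≤ y := le_of_lt hy
      nlinarith [mul_le_mul_of_nonneg_left hy2 (by positivity : (0:ℝ) ≤ π * (n : ℝ) ^ 2)]
  exact key

lemma continuousAt_F (k : ℕ) {t : ℝ} (ht : 0 < t) : ContinuousAt (F k) t :=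
  (hasDerivAt_F k ht).continuousAt

lemma F_bound (k : ℕ) : ∃ C : ℝ, 0 ≤ C ∧ ∀ t : ℝ, 1 ≤ t → |F k t| ≤ C * rexp (-π * t) := by
  refine ⟨rexp π * (∑' n : ℕ+, (π * (n : ℝ) ^ 2) ^ k * rexp (-π * (n : ℝ) ^ 2)),
    mul_nonneg (exp_pos _).le (tsum_nonneg fun n => by positivity), ?_⟩
  intro t ht
  have ht0 : (0 : ℝ) < t := by linarith
  have hb : ∀ n : ℕ+, |(-(π * (n : ℝ) ^ 2)) ^ k * rexp (-π * (n : ℝ) ^ 2 * t)|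
      ≤ ((π * (n : ℝ) ^ 2) ^ k * rexp (-π * (n : ℝ) ^ 2)) * (rexp π * rexp (-π * t)) := by
    intro n
    rw [abs_term, show (π * (n:ℝ)^2)^k * rexp (-π*(n:ℝ)^2) * (rexp π * rexp (-π*t))
      = (π*(n:ℝ)^2)^k * rexp (-π*(n:ℝ)^2 + (π + -π*t)) by rw [Real.exp_add, Real.exp_add]; ring]
    refine mul_le_mul_of_nonneg_left (exp_le_exp.mpr ?_) (by positivity)
    have h1 := one_le_sq n
    nlinarith [pi_pos, mul_le_mul_of_nonneg_left (sub_le_sub_right h1 1) (mul_nonneg pi_pos.le (sub_nonneg.mpr ht))]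
  have hsum : Summable fun n : ℕ+ => ‖(-(π * (n : ℝ) ^ 2)) ^ k * rexp (-π * (n : ℝ) ^ 2 * t)‖ := by
    simpa only [Real.norm_eq_abs] using (summable_pnat' k ht0).abs
  have h0 : |F k t| ≤ ∑' n : ℕ+, |(-(π * (n : ℝ) ^ 2)) ^ k * rexp (-π * (n : ℝ) ^ 2 * t)| := by
    unfold F
    simpa only [Real.norm_eq_abs] using norm_tsum_le_tsum_norm hsum
  refine h0.trans ?_
  calc (∑' n : ℕ+, |(-(π * (n : ℝ) ^ 2)) ^ k * rexp (-π * (n : ℝ) ^ 2 * t)|)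
      ≤ ∑' n : ℕ+, ((π * (n : ℝ) ^ 2) ^ k * rexp (-π * (n : ℝ) ^ 2)) * (rexp π * rexp (-π * t)) := by
        have hsum2 : Summable (fun n : ℕ+ =>
            ((π * (n : ℝ) ^ 2) ^ k * rexp (-π * (n : ℝ) ^ 2)) * (rexp π * rexp (-π * t))) := by
          refine ((summable_pnat k one_pos).congr fun n => by rw [mul_one]).mul_right _
        refine Summable.tsum_le_tsum hb ?_ hsum2
        simpa only [Real.norm_eq_abs] using hsum
    _ = rexp π * (∑' n : ℕ+, (π * (n : ℝ) ^ 2) ^ k * rexp (-π * (n : ℝ) ^ 2)) * rexp (-π * t) := by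
        rw [tsum_mul_right]
        ring


lemma continuousOn_cpow_F (k : ℕ) (c : ℂ) :
    ContinuousOn (fun t : ℝ => (t : ℂ) ^ c * (F k t : ℂ)) (Ici 1) := by
  intro x hx
  have hx0 : (0 : ℝ) < x := lt_of_lt_of_le one_pos hx
  refine ContinuousAt.continuousWithinAt ?_
  refine ContinuousAt.mul ?_ (Complex.continuous_ofReal.continuousAt.comp (continuousAt_F k hx0))
  exact (continuousAt_cpow_const (by simp [Complex.mem_slitPlane_iff, hx0])).comp
    Complex.continuous_ofReal.continuousAt

lemma norm_cpow_F (k : ℕ) (c : ℂ) {t : ℝ} (ht : 0 < t) :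
    ‖(t : ℂ) ^ c * (F k t : ℂ)‖ = t ^ c.re * |F k t| := by
  rw [norm_mul, Complex.norm_cpow_eq_rpow_re_of_pos ht, Complex.norm_real, Real.norm_eq_abs]

lemma integrable_rpow_exp (r : ℝ) :
    IntegrableOn (fun t : ℝ => t ^ r * rexp (-π * t)) (Ioi 1) := by
  refine integrable_of_isBigO_exp_neg (a := 1) (b := 1) one_pos ?_ ?_
  · refine ContinuousOn.mul ?_ (Continuous.continuousOn (by continuity))
    exact ContinuousOn.rpow_const continuousOn_id
      (fun x hx => Or.inl (ne_of_gt (lt_of_lt_of_le one_pos hx)))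
  · have h1 : (fun x : ℝ => x ^ r * rexp (-(π - 1) * x)) =O[Filter.atTop] (fun _ => (1 : ℝ)) :=
      (tendsto_rpow_mul_exp_neg_mul_atTop_nhds_zero r (π - 1)
        (by nlinarith [pi_gt_three])).isBigO_one ℝ
    have h2 := h1.mul (isBigO_refl (fun x : ℝ => rexp (-1 * x)) Filter.atTop)
    refine h2.congr (fun x => ?_) (fun x => one_mul _)
    rw [mul_assoc, ← Real.exp_add]
    ring_nf

lemma integrableF (k : ℕ) (c : ℂ) :
    IntegrableOn (fun t : ℝ => (t : ℂ) ^ c * (F k t : ℂ)) (Ioi 1) := by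
  obtain ⟨C, hC0, hC⟩ := F_bound k
  refine Integrable.mono' (((integrable_rpow_exp c.re).const_mul C)) ?_ ?_
  · exact ((continuousOn_cpow_F k c).mono Ioi_subset_Ici_self).aestronglyMeasurable
      measurableSet_Ioi
  · rw [ae_restrict_iff' measurableSet_Ioi]
    refine Filter.Eventually.of_forall (fun t ht => ?_)
    have ht1 : (1 : ℝ) ≤ t := le_of_lt ht
    have ht0 : (0 : ℝ) < t := lt_of_lt_of_le one_pos ht1
    rw [norm_cpow_F k c ht0]
    calc t ^ c.re * |F k t| ≤ t ^ c.re * (C * rexp (-π * t)) := by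
          refine mul_le_mul_of_nonneg_left (hC t ht1) (by positivity)
      _ = C * (t ^ c.re * rexp (-π * t)) := by ring

lemma tendstoF (k : ℕ) (c : ℂ) :
    Filter.Tendsto (fun t : ℝ => (t : ℂ) ^ c * (F k t : ℂ)) Filter.atTop (𝓝 0) := by
  obtain ⟨C, hC0, hC⟩ := F_bound k
  have hg : Filter.Tendsto (fun t : ℝ => C * (t ^ c.re * rexp (-π * t))) Filter.atTop (𝓝 0) := by
    have := (tendsto_rpow_mul_exp_neg_mul_atTop_nhds_zero c.re π pi_pos).const_mul C
    simpa using this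
  refine squeeze_zero_norm' ?_ hg
  filter_upwards [Filter.eventually_ge_atTop (1 : ℝ)] with t ht
  have ht0 : (0 : ℝ) < t := lt_of_lt_of_le one_pos ht
  rw [norm_cpow_F k c ht0]
  calc t ^ c.re * |F k t| ≤ t ^ c.re * (C * rexp (-π * t)) :=
        mul_le_mul_of_nonneg_left (hC t ht) (by positivity)
    _ = C * (t ^ c.re * rexp (-π * t)) := by ring

lemma hasDerivAt_cpow_real {c : ℂ} (hc : c ≠ 0) {x : ℝ} (hx : 0 < x) :
    HasDerivAt (fun y : ℝ => (y : ℂ) ^ c) (c * (x : ℂ) ^ (c - 1)) x := by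
  have h1 : c - 1 ≠ -1 := by
    intro h
    exact hc (by linear_combination h)
  have h := (hasDerivAt_ofReal_cpow_const' hx.ne' h1).const_mul c
  simp only [sub_add_cancel] at h
  have heq : (fun y : ℝ => c * ((y : ℂ) ^ c / c)) = fun y : ℝ => (y : ℂ) ^ c := by
    funext y
    field_simp
  rwa [heq] at h

lemma I_succ (k : ℕ) {c : ℂ} (hc : c ≠ 0) :
    ∫ t in Ioi (1:ℝ), (t : ℂ) ^ c * (F (k+1) t : ℂ) =
      -(F k 1 : ℂ) - c * ∫ t in Ioi (1:ℝ), (t : ℂ) ^ (c - 1) * (F k t : ℂ) := by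
  have hint1 : IntegrableOn (fun t : ℝ => c * ((t : ℂ) ^ (c-1) * (F k t : ℂ))) (Ioi 1) :=
    (integrableF k (c-1)).const_mul c
  have hint : IntegrableOn
      (fun t : ℝ => c * ((t : ℂ) ^ (c-1) * (F k t : ℂ)) + (t : ℂ) ^ c * (F (k+1) t : ℂ)) (Ioi 1) :=
    hint1.add (integrableF (k+1) c)
  have hder : ∀ x ∈ Ici (1:ℝ), HasDerivAt (fun t : ℝ => (t : ℂ) ^ c * (F k t : ℂ))
      (c * ((x : ℂ) ^ (c-1) * (F k x : ℂ)) + (x : ℂ) ^ c * (F (k+1) x : ℂ)) x := by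
    intro x hx
    have hx0 : (0 : ℝ) < x := lt_of_lt_of_le one_pos hx
    have h := (hasDerivAt_cpow_real hc hx0).mul ((hasDerivAt_F k hx0).ofReal_comp)
    refine h.congr_deriv ?_
    ring
  have key := integral_Ioi_of_hasDerivAt_of_tendsto' hder hint (tendstoF k c)
  rw [integral_add hint1 (integrableF (k+1) c), integral_const_mul] at key
  simp only [Complex.ofReal_one, one_cpow, one_mul] at key
  linear_combination key


lemma evenKernel_zero_eq {t : ℝ} (ht : 0 < t) :
    HurwitzZeta.evenKernel 0 t = 1 + 2 * F 0 t := by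
  have h := HurwitzZeta.hasSum_int_evenKernel₀ (0 : ℝ) ht
  simp only [add_zero, Int.cast_eq_zero, QuotientAddGroup.mk_zero, if_true, Complex.ofReal_zero] at h
  have h2 := h.nat_add_neg
  have h0 : (if (0:ℤ) = 0 then (0:ℝ) else rexp (-π * ((0:ℤ):ℝ) ^ 2 * t)) = 0 := by simp
  rw [h0, add_zero] at h2
  have h3 : HasSum (fun n : ℕ => if n = 0 then (0:ℝ) else 2 * rexp (-π * (n:ℝ) ^ 2 * t))
      (HurwitzZeta.evenKernel 0 t - 1) := by
    convert h2 using 1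
    funext n
    rcases Nat.eq_zero_or_pos n with hn | hn
    · simp [hn]
    · have c1 : ((n : ℤ)) ≠ 0 := by exact_mod_cast hn.ne'
      have c2 : (-(n : ℤ)) ≠ 0 := by simpa using c1
      rw [if_neg hn.ne', if_neg c1, if_neg c2]
      push_cast
      ring_nf
  have hrange : ∀ x ∉ Set.range (fun n : ℕ+ => (n : ℕ)),
      (if x = 0 then (0:ℝ) else 2 * rexp (-π * (x:ℝ) ^ 2 * t)) = 0 := by
    intro x hx
    have hx0 : x = 0 := by
      by_contra hc
      exact hx ⟨⟨x, Nat.pos_of_ne_zero hc⟩, rfl⟩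
    simp [hx0]
  have h4 := (Function.Injective.hasSum_iff PNat.coe_injective hrange).mpr h3
  have h4' : HasSum (fun n : ℕ+ => 2 * rexp (-π * (n:ℝ) ^ 2 * t))
      (HurwitzZeta.evenKernel 0 t - 1) := by
    refine h4.congr_fun ?_
    intro n
    simp [Function.comp, n.ne_zero]
  have h5 : HasSum (fun n : ℕ+ => (-(π * (n:ℝ) ^ 2)) ^ 0 * rexp (-π * (n:ℝ) ^ 2 * t)) (F 0 t) :=
    (summable_pnat' 0 ht).hasSum
  have h5' : HasSum (fun n : ℕ+ => rexp (-π * (n:ℝ) ^ 2 * t)) (F 0 t) := by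
    simpa using h5
  have := h4'.unique (h5'.mul_left 2)
  linarith

lemma F0_inv {x : ℝ} (hx : 0 < x) :
    F 0 x⁻¹ = -1/2 + Real.sqrt x / 2 + Real.sqrt x * F 0 x := by
  have hfe := HurwitzZeta.evenKernel_functional_equation (0 : UnitAddCircle) x
  rw [← HurwitzZeta.evenKernel_eq_cosKernel_of_zero, one_div x,
    evenKernel_zero_eq hx, evenKernel_zero_eq (inv_pos.mpr hx)] at hfe
  have hpos : (0:ℝ) < x ^ ((1:ℝ)/2) := Real.rpow_pos_of_pos hx _
  have hfe' : x ^ ((1:ℝ)/2) * (1 + 2 * F 0 x) = 1 + 2 * F 0 x⁻¹ := by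
    rw [hfe]
    field_simp
  rw [Real.sqrt_eq_rpow]
  linear_combination -hfe' / 2

lemma key_value : 4 * F 1 1 + F 0 1 = -(1/2 : ℝ) := by
  have hinv : HasDerivAt (fun x : ℝ => x⁻¹) (-1) 1 := by
    simpa using hasDerivAt_inv (x := (1:ℝ)) one_ne_zero
  have houter : HasDerivAt (F 0) (F 1 1) ((1:ℝ)⁻¹) := by
    rw [inv_one]
    exact hasDerivAt_F 0 one_pos
  have h1 : HasDerivAt (fun x : ℝ => F 0 x⁻¹) (F 1 1 * -1) 1 := houter.comp 1 hinv
  have hsq : HasDerivAt Real.sqrt (1/2) 1 := by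
    simpa using Real.hasDerivAt_sqrt one_ne_zero
  have h2 : HasDerivAt (fun x : ℝ => -1/2 + Real.sqrt x / 2 + Real.sqrt x * F 0 x)
      ((1/2)/2 + ((1/2) * F 0 1 + Real.sqrt 1 * F 1 1)) 1 :=
    ((hsq.div_const 2).const_add (-1/2)).add (hsq.mul (hasDerivAt_F 0 one_pos))
  have heq : (fun x : ℝ => F 0 x⁻¹) =ᶠ[nhds 1]
      (fun x : ℝ => -1/2 + Real.sqrt x / 2 + Real.sqrt x * F 0 x) := by
    filter_upwards [Ioi_mem_nhds (zero_lt_one)] with x hx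
    exact F0_inv hx
  have h2' : HasDerivAt (fun x : ℝ => F 0 x⁻¹)
      ((1/2)/2 + ((1/2) * F 0 1 + Real.sqrt 1 * F 1 1)) 1 := h2.congr_of_eventuallyEq heq
  have := h1.unique h2'
  rw [Real.sqrt_one] at this
  linarith


noncomputable def θA : ℝ → ℂ :=
  (Ioi (1:ℝ)).indicator (fun x => (HurwitzZeta.evenKernel 0 x : ℂ) - 1)

noncomputable def θB : ℝ → ℂ :=
  (Ioo (0:ℝ) 1).indicator
    (fun x => (HurwitzZeta.evenKernel 0 x : ℂ) - ((x ^ (-(1/2) : ℝ) : ℝ) : ℂ))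

lemma f_modif_eq : (HurwitzZeta.hurwitzEvenFEPair 0).f_modif = fun x => θA x + θB x := by
  funext x
  simp only [WeakFEPair.f_modif, HurwitzZeta.hurwitzEvenFEPair, Pi.add_apply, if_pos rfl,
    smul_eq_mul, mul_one, one_mul, Function.comp, θA, θB]
  norm_num

lemma mellinConv_f_modif (w : ℂ) :
    MellinConvergent (HurwitzZeta.hurwitzEvenFEPair 0).f_modif w :=
  ((HurwitzZeta.hurwitzEvenFEPair 0).isStrongFEPair_toStrongFEPair.hasMellin w).1

lemma convA (w : ℂ) : MellinConvergent θA w := by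
  have h : (fun t : ℝ => (t:ℂ)^(w-1) • θA t) = (Ioi (1:ℝ)).indicator
      (fun t => (t:ℂ)^(w-1) • ((HurwitzZeta.hurwitzEvenFEPair 0).f_modif t)) := by
    funext t
    by_cases h : t ∈ Ioi (1:ℝ)
    · rw [indicator_of_mem h, f_modif_eq]
      have hB : θB t = 0 := indicator_of_notMem
        (fun hc => absurd hc.2 (not_lt.mpr h.out.le)) _
      simp [hB]
    · rw [indicator_of_notMem h, θA, indicator_of_notMem h, smul_zero]
  show IntegrableOn _ _ _
  rw [h]
  exact (mellinConv_f_modif w).indicator measurableSet_Ioi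

lemma convB (w : ℂ) : MellinConvergent θB w := by
  have h : (fun t : ℝ => (t:ℂ)^(w-1) • θB t) = (Ioo (0:ℝ) 1).indicator
      (fun t => (t:ℂ)^(w-1) • ((HurwitzZeta.hurwitzEvenFEPair 0).f_modif t)) := by
    funext t
    by_cases h : t ∈ Ioo (0:ℝ) 1
    · rw [indicator_of_mem h, f_modif_eq]
      have hA : θA t = 0 := indicator_of_notMem
        (fun hc => absurd h.2 (not_lt.mpr hc.out.le)) _
      simp [hA]
    · rw [indicator_of_notMem h, θB, indicator_of_notMem h, smul_zero]
  show IntegrableOn _ _ _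
  rw [h]
  exact (mellinConv_f_modif w).indicator measurableSet_Ioo

lemma mellinA (w : ℂ) :
    mellin θA w = ∫ t in Ioi (1:ℝ), (t:ℂ)^(w-1) * (2 * (F 0 t : ℂ)) := by
  rw [show mellin θA w = ∫ t in Ioi (0:ℝ), (t:ℂ)^(w-1) • θA t from rfl]
  have h1 : ∀ t ∈ Ioi (0:ℝ), (t:ℂ)^(w-1) • θA t =
      (Ioi (1:ℝ)).indicator (fun t : ℝ => (t:ℂ)^(w-1) * (2 * (F 0 t : ℂ))) t := by
    intro t _
    by_cases h : t ∈ Ioi (1:ℝ)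
    · rw [indicator_of_mem h, θA, indicator_of_mem h, smul_eq_mul,
        evenKernel_zero_eq (lt_trans one_pos h.out)]
      push_cast
      ring
    · rw [indicator_of_notMem h, θA, indicator_of_notMem h, smul_zero]
  rw [setIntegral_congr_fun measurableSet_Ioi h1, setIntegral_indicator measurableSet_Ioi,
    Ioi_inter_Ioi]
  norm_num

lemma mellinB (w : ℂ) :
    mellin θB w = ∫ t in Ioi (1:ℝ), (t:ℂ)^(-w - 1/2) * (2 * (F 0 t : ℂ)) := by
  have h0 := mellin_comp_inv θB (-w)
  rw [neg_neg] at h0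
  rw [← h0]
  rw [show mellin (fun t => θB t⁻¹) (-w) = ∫ t in Ioi (0:ℝ), (t:ℂ)^(-w-1) • θB t⁻¹ from rfl]
  have h1 : ∀ t ∈ Ioi (0:ℝ), (t:ℂ)^(-w-1) • θB t⁻¹ =
      (Ioi (1:ℝ)).indicator (fun t : ℝ => (t:ℂ)^(-w - 1/2) * (2 * (F 0 t : ℂ))) t := by
    intro t ht
    have ht0 : (0:ℝ) < t := ht.out
    have htne : (t:ℂ) ≠ 0 := Complex.ofReal_ne_zero.mpr ht0.ne'
    by_cases h : t ∈ Ioi (1:ℝ)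
    · have h1t : (1:ℝ) < t := h.out
      have hmem : t⁻¹ ∈ Ioo (0:ℝ) 1 := ⟨inv_pos.mpr ht0, inv_lt_one_of_one_lt₀ h1t⟩
      rw [indicator_of_mem h, θB, indicator_of_mem hmem, smul_eq_mul,
        evenKernel_zero_eq (inv_pos.mpr ht0), F0_inv ht0]
      have hrp : (t⁻¹ : ℝ) ^ (-(1/2) : ℝ) = Real.sqrt t := by
        rw [← Real.rpow_neg_one t, ← Real.rpow_mul ht0.le]
        norm_num [Real.sqrt_eq_rpow]
      have hsq : ((Real.sqrt t : ℝ) : ℂ) = (t:ℂ) ^ (1/2 : ℂ) := by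
        rw [Real.sqrt_eq_rpow, Complex.ofReal_cpow ht0.le]
        norm_num
      have hXY : (t:ℂ) ^ (-w - 1/2) = (t:ℂ) ^ (-w-1) * (t:ℂ) ^ (1/2 : ℂ) := by
        rw [← Complex.cpow_add _ _ htne]
        congr 1
        ring
      rw [hrp, hXY]
      push_cast
      rw [hsq]
      ring
    · have hnm : t⁻¹ ∉ Ioo (0:ℝ) 1 := by
        intro hc
        have h1t : (1:ℝ) ≤ t⁻¹ := by
          have hi : (0:ℝ) < t⁻¹ := inv_pos.mpr ht0
          have hmul : t * t⁻¹ = 1 := mul_inv_cancel₀ ht0.ne'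
          have hle : t ≤ 1 := not_lt.mp h
          nlinarith
        exact absurd hc.2 (not_lt.mpr h1t)
      rw [indicator_of_notMem h, θB, indicator_of_notMem hnm, smul_zero]
  rw [setIntegral_congr_fun measurableSet_Ioi h1, setIntegral_indicator measurableSet_Ioi,
    Ioi_inter_Ioi]
  norm_num


lemma completedRiemannZeta₀_eq (s : ℂ) :
    completedRiemannZeta₀ s =
      ∫ t in Ioi (1:ℝ), ((t:ℂ)^(s/2 - 1) + (t:ℂ)^(-(s/2) - 1/2)) * (F 0 t : ℂ) := by
  have h0 : completedRiemannZeta₀ s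
      = mellin (HurwitzZeta.hurwitzEvenFEPair 0).f_modif (s/2) / 2 := rfl
  rw [h0, f_modif_eq, (hasMellin_add (convA (s/2)) (convB (s/2))).2, mellinA, mellinB]
  have hA2 : (∫ t in Ioi (1:ℝ), (t:ℂ)^(s/2-1) * (2*(F 0 t:ℂ)))
      = 2 * ∫ t in Ioi (1:ℝ), (t:ℂ)^(s/2-1) * (F 0 t:ℂ) := by
    rw [← integral_const_mul]
    exact setIntegral_congr_fun measurableSet_Ioi fun t _ => by ring
  have hB2 : (∫ t in Ioi (1:ℝ), (t:ℂ)^(-(s/2)-1/2) * (2*(F 0 t:ℂ)))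
      = 2 * ∫ t in Ioi (1:ℝ), (t:ℂ)^(-(s/2)-1/2) * (F 0 t:ℂ) := by
    rw [← integral_const_mul]
    exact setIntegral_congr_fun measurableSet_Ioi fun t _ => by ring
  have hsum : (∫ t in Ioi (1:ℝ), ((t:ℂ)^(s/2-1) + (t:ℂ)^(-(s/2)-1/2)) * (F 0 t : ℂ))
      = (∫ t in Ioi (1:ℝ), (t:ℂ)^(s/2-1) * (F 0 t:ℂ))
        + ∫ t in Ioi (1:ℝ), (t:ℂ)^(-(s/2)-1/2) * (F 0 t:ℂ) := by
    rw [← integral_add (integrableF 0 (s/2-1)) (integrableF 0 (-(s/2)-1/2))]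
    exact setIntegral_congr_fun measurableSet_Ioi fun t _ => by ring
  rw [hA2, hB2, hsum]
  ring

lemma deriv_psi_eq {t : ℝ} (ht : 0 < t) : deriv psi t = F 1 t := by
  rw [← F_zero_eq]
  exact (hasDerivAt_F 0 ht).deriv

lemma deriv_deriv_psi_eq {t : ℝ} (ht : 0 < t) : deriv (deriv psi) t = F 2 t := by
  have h : deriv psi =ᶠ[nhds t] F 1 := by
    filter_upwards [Ioi_mem_nhds ht] with x hx using deriv_psi_eq hx
  rw [h.deriv_eq]
  exact (hasDerivAt_F 1 ht).deriv

lemma xi_eq_completed {s : ℂ} (hs : s ≠ 0) (hre : 0 < s.re) :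
    xi s = s * (s - 1) / 2 * completedRiemannZeta s := by
  have hne : Complex.Gammaℝ s ≠ 0 := Complex.Gammaℝ_ne_zero_of_re_pos hre
  unfold xi
  rw [show (1:ℂ) + s/2 = s/2 + 1 by ring,
    Complex.Gamma_add_one (s/2) (div_ne_zero hs two_ne_zero),
    riemannZeta_def_of_ne_zero hs]
  rw [Complex.Gammaℝ_def] at hne ⊢
  have hG : Complex.Gamma (s * (1 / 2)) ≠ 0 := by
    rw [← div_eq_mul_one_div]; exact right_ne_zero_of_mul hne
  field_simp
  linear_combination (s - 1) * completedRiemannZeta s * (mul_inv_cancel₀ (right_ne_zero_of_mul hne))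

lemma cos_comb (τ : ℝ) {t : ℝ} (ht : 0 < t) :
    2 * (((t ^ ((1:ℝ)/4) : ℝ) : ℂ) * ((Real.cos (τ/2 * Real.log t) : ℝ) : ℂ))
      = (t:ℂ)^((1/2 + Complex.I*(τ:ℂ))/2) + (t:ℂ)^((1 - (1/2 + Complex.I*(τ:ℂ)))/2) := by
  have htne : (t:ℂ) ≠ 0 := Complex.ofReal_ne_zero.mpr ht.ne'
  have hlog : Complex.log (t:ℂ) = ((Real.log t : ℝ) : ℂ) := (Complex.ofReal_log ht.le).symm
  rw [Complex.cpow_def_of_ne_zero htne, Complex.cpow_def_of_ne_zero htne, hlog]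
  rw [show ((Real.log t : ℝ) : ℂ) * ((1/2 + Complex.I*(τ:ℂ))/2)
      = ((Real.log t : ℝ):ℂ)/4 + (((τ/2 * Real.log t : ℝ)):ℂ) * Complex.I by push_cast; ring]
  rw [show ((Real.log t : ℝ) : ℂ) * ((1 - (1/2 + Complex.I*(τ:ℂ)))/2)
      = ((Real.log t : ℝ):ℂ)/4 + -((((τ/2 * Real.log t : ℝ)):ℂ) * Complex.I) by push_cast; ring]
  rw [Complex.exp_add, Complex.exp_add]
  have hquarter : ((t ^ ((1:ℝ)/4) : ℝ) : ℂ) = Complex.exp (((Real.log t : ℝ):ℂ)/4) := by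
    rw [Real.rpow_def_of_pos ht, Complex.ofReal_exp]
    push_cast
    ring_nf
  have hcos : ((Real.cos (τ/2 * Real.log t) : ℝ) : ℂ)
      = (Complex.exp ((((τ/2 * Real.log t : ℝ)):ℂ) * Complex.I)
        + Complex.exp (-((((τ/2 * Real.log t : ℝ)):ℂ) * Complex.I))) / 2 := by
    rw [Complex.ofReal_cos, Complex.cos]
    ring_nf
  rw [hquarter, hcos]
  ring

end XiRep

open XiRep in
theorem Xi_psi_derivative_rep (τ : ℝ) :
    xi (1 / 2 + I * τ) = 4 *
      ((∫ t in Ioi (1 : ℝ), t ^ ((1 : ℝ) / 4) * Real.cos (τ / 2 * Real.log t) *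
        (t * deriv (deriv psi) t + 3 / 2 * deriv psi t) : ℝ) : ℂ) := by
  set s : ℂ := 1 / 2 + I * τ with hs
  have hsre : s.re = 1 / 2 := by
    rw [hs]
    simp
  have hs0 : s ≠ 0 := by
    intro h
    rw [h] at hsre
    norm_num at hsre
  have hs1 : (1 : ℂ) - s ≠ 0 := by
    intro h
    have h2 : s = 1 := by linear_combination -h
    rw [h2] at hsre
    norm_num at hsre
  have hA0 : s / 2 ≠ 0 := div_ne_zero hs0 two_ne_zero
  have hB0 : (1 - s) / 2 ≠ 0 := div_ne_zero hs1 two_ne_zero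
  have hA10 : s / 2 + 1 ≠ 0 := by
    intro h
    have h2 : s = -2 := by linear_combination 2 * h
    rw [h2] at hsre
    norm_num at hsre
  have hB10 : (1 - s) / 2 + 1 ≠ 0 := by
    intro h
    have h2 : s = 3 := by linear_combination -2 * h
    rw [h2] at hsre
    norm_num at hsre
  -- left side
  have hL1 : xi s = s * (s - 1) / 2 * completedRiemannZeta s :=
    xi_eq_completed hs0 (by rw [hsre]; norm_num)
  have hsplit : (∫ t in Ioi (1:ℝ), ((t:ℂ)^(s/2 - 1) + (t:ℂ)^(-(s/2) - 1/2)) * (F 0 t : ℂ))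
      = (∫ t in Ioi (1:ℝ), (t:ℂ)^(s/2 - 1) * (F 0 t : ℂ))
        + ∫ t in Ioi (1:ℝ), (t:ℂ)^(-(s/2) - 1/2) * (F 0 t : ℂ) := by
    rw [← integral_add (integrableF 0 (s/2 - 1)) (integrableF 0 (-(s/2) - 1/2))]
    exact setIntegral_congr_fun measurableSet_Ioi fun t _ => by ring
  rw [hL1, completedRiemannZeta_eq, completedRiemannZeta₀_eq, hsplit]
  -- right side
  have hR1 : (∫ t in Ioi (1:ℝ), t ^ ((1:ℝ)/4) * Real.cos (τ / 2 * Real.log t) *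
        (t * deriv (deriv psi) t + 3 / 2 * deriv psi t))
      = ∫ t in Ioi (1:ℝ), t ^ ((1:ℝ)/4) * Real.cos (τ / 2 * Real.log t) *
        (t * F 2 t + 3 / 2 * F 1 t) := by
    refine setIntegral_congr_fun measurableSet_Ioi fun t htm => ?_
    have ht0 : (0:ℝ) < t := lt_trans zero_lt_one htm.out
    rw [deriv_psi_eq ht0, deriv_deriv_psi_eq ht0]
  rw [hR1]
  rw [show (((∫ t in Ioi (1:ℝ), t ^ ((1:ℝ)/4) * Real.cos (τ / 2 * Real.log t) *
        (t * F 2 t + 3 / 2 * F 1 t)) : ℝ) : ℂ)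
      = ∫ t in Ioi (1:ℝ), ((t ^ ((1:ℝ)/4) * Real.cos (τ / 2 * Real.log t) *
        (t * F 2 t + 3 / 2 * F 1 t) : ℝ) : ℂ) from integral_ofReal.symm]
  -- integrabilities
  have j1 : IntegrableOn (fun t : ℝ => (2:ℂ) * ((t:ℂ)^(s/2 + 1) * (F 2 t : ℂ))) (Ioi 1) :=
    (integrableF 2 (s/2 + 1)).const_mul 2
  have j2 : IntegrableOn (fun t : ℝ => (2:ℂ) * ((t:ℂ)^((1-s)/2 + 1) * (F 2 t : ℂ))) (Ioi 1) :=
    (integrableF 2 ((1-s)/2 + 1)).const_mul 2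
  have j3 : IntegrableOn (fun t : ℝ => (3:ℂ) * ((t:ℂ)^(s/2) * (F 1 t : ℂ))) (Ioi 1) :=
    (integrableF 1 (s/2)).const_mul 3
  have j4 : IntegrableOn (fun t : ℝ => (3:ℂ) * ((t:ℂ)^((1-s)/2) * (F 1 t : ℂ))) (Ioi 1) :=
    (integrableF 1 ((1-s)/2)).const_mul 3
  have hR3 : (4:ℂ) * (∫ t in Ioi (1:ℝ), ((t ^ ((1:ℝ)/4) * Real.cos (τ / 2 * Real.log t) *
        (t * F 2 t + 3 / 2 * F 1 t) : ℝ) : ℂ))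
      = 2 * (∫ t in Ioi (1:ℝ), (t:ℂ)^(s/2 + 1) * (F 2 t : ℂ))
        + (2 * (∫ t in Ioi (1:ℝ), (t:ℂ)^((1-s)/2 + 1) * (F 2 t : ℂ))
        + (3 * (∫ t in Ioi (1:ℝ), (t:ℂ)^(s/2) * (F 1 t : ℂ))
        + 3 * (∫ t in Ioi (1:ℝ), (t:ℂ)^((1-s)/2) * (F 1 t : ℂ)))) := by
    have j34 : IntegrableOn (fun t : ℝ => (3:ℂ) * ((t:ℂ)^(s/2) * (F 1 t : ℂ))
        + (3:ℂ) * ((t:ℂ)^((1-s)/2) * (F 1 t : ℂ))) (Ioi 1) := j3.add j4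
    have j234 : IntegrableOn (fun t : ℝ => (2:ℂ) * ((t:ℂ)^((1-s)/2 + 1) * (F 2 t : ℂ))
        + ((3:ℂ) * ((t:ℂ)^(s/2) * (F 1 t : ℂ))
          + (3:ℂ) * ((t:ℂ)^((1-s)/2) * (F 1 t : ℂ)))) (Ioi 1) := j2.add j34
    conv_rhs => rw [← integral_const_mul, ← integral_const_mul, ← integral_const_mul,
      ← integral_const_mul, ← integral_add j3 j4, ← integral_add j2 j34,
      ← integral_add j1 j234]
    rw [← integral_const_mul]
    refine setIntegral_congr_fun measurableSet_Ioi fun t htm => ?_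
    have ht0 : (0:ℝ) < t := lt_trans zero_lt_one htm.out
    have htne : (t:ℂ) ≠ 0 := Complex.ofReal_ne_zero.mpr ht0.ne'
    have hcc := cos_comb τ ht0
    rw [← hs] at hcc
    have hA1 : (t:ℂ)^(s/2 + 1) = (t:ℂ)^(s/2) * t := by
      rw [Complex.cpow_add _ _ htne, Complex.cpow_one]
    have hB1 : (t:ℂ)^((1-s)/2 + 1) = (t:ℂ)^((1-s)/2) * t := by
      rw [Complex.cpow_add _ _ htne, Complex.cpow_one]
    rw [hA1, hB1]
    push_cast at hcc ⊢
    linear_combination ((2:ℂ) * (t:ℂ) * (F 2 t : ℂ) + 3 * (F 1 t : ℂ)) * hcc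
  rw [hR3]
  -- integration by parts
  have e1 := I_succ 1 hA10
  rw [show (s/2 + 1 - 1 : ℂ) = s/2 by ring] at e1
  have e2 := I_succ 1 hB10
  rw [show ((1-s)/2 + 1 - 1 : ℂ) = (1-s)/2 by ring] at e2
  have e3 := I_succ 0 hA0
  have e4 := I_succ 0 hB0
  rw [show ((1-s)/2 - 1 : ℂ) = -(s/2) - 1/2 by ring] at e4
  simp only [Nat.reduceAdd] at e1 e2 e3 e4
  have hpole : s * (s-1) / 2 * (1/s) + s * (s-1) / 2 * (1/(1-s)) = -(1/2 : ℂ) := by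
    field_simp
    ring
  have kv : (4 : ℂ) * (F 1 1 : ℂ) + (F 0 1 : ℂ) = -(1/2 : ℂ) := by
    have h := congrArg (fun x : ℝ => (x : ℂ)) key_value
    push_cast at h
    exact h
  linear_combination (-1 : ℂ) * hpole - 2 * e1 - 2 * e2 + (s - 1) * e3 - s * e4 + kv
end
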